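/- Let G be a connected graph of order n ≥ 2 with no true twin vertices, and let H be a non-complete graph of order n' ≥ 2. Then the strong resolving graph of G∘H is isomorphic to (G_SR ∘ H*) ∪ (n − |∂(G)|) disjoint copies of H*_−. -/

import Mathlib

open SimpleGraph

namespace Paper

variable {α β : Type*}

/-- The lexicographic product of two simple graphs. -/
def lexProd (G : SimpleGraph α) (H : SimpleGraph β) : SimpleGraph (α × β) where
  Adj p q := G.Adj p.1 q.1 ∨ (p.1 = q.1 ∧ H.Adj p.2 q.2)
  symm := ⟨by
    rintro ⟨a, b⟩ ⟨c, d⟩ (h | ⟨h1, h2⟩)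
    · exact Or.inl h.symm
    · exact Or.inr ⟨h1.symm, h2.symm⟩⟩
  loopless := ⟨by
    rintro ⟨a, b⟩ (h | ⟨h1, h2⟩)
    · exact G.loopless.1 a h
    · exact H.loopless.1 b h2⟩

/-- `u` is maximally distant from `v`. -/
def MaxDistant (G : SimpleGraph α) (u v : α) : Prop :=
  ∀ w, G.Adj u w → G.edist v w ≤ G.edist u v

/-- `u` and `v` are mutually maximally distant. -/
def MMD (G : SimpleGraph α) (u v : α) : Prop :=
  MaxDistant G u v ∧ MaxDistant G v u

/-- Two vertices are true twins if they have the same closed neighborhood. -/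
def TrueTwins (G : SimpleGraph α) (u v : α) : Prop :=
  ∀ w, (G.Adj u w ∨ u = w) ↔ (G.Adj v w ∨ v = w)

/-- The boundary of a graph: vertices belonging to some mutually maximally distant pair. -/
def boundary (G : SimpleGraph α) : Set α := {u | ∃ v, u ≠ v ∧ MMD G u v}

/-- The strong resolving graph of `G`, with vertex set the boundary of `G`. -/
def srGraph (G : SimpleGraph α) : SimpleGraph (boundary G) where
  Adj u v := u.1 ≠ v.1 ∧ MMD G u.1 v.1
  symm := ⟨fun u v h => ⟨h.1.symm, h.2.2, h.2.1⟩⟩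
  loopless := ⟨fun u h => h.1 rfl⟩

/-- The graph `G*`: same vertices, `u ~ v` iff `d_G(u,v) ≥ 2` or `u,v` are true twins. -/
def gstar (G : SimpleGraph α) : SimpleGraph α where
  Adj u v := u ≠ v ∧ (2 ≤ G.edist u v ∨ TrueTwins G u v)
  symm := ⟨by
    rintro u v ⟨h1, (h2 | h2)⟩
    · exact ⟨h1.symm, Or.inl (by rwa [G.edist_comm] at h2)⟩
    · exact ⟨h1.symm, Or.inr fun w => (h2 w).symm⟩⟩
  loopless := ⟨fun u h => h.1 rfl⟩

/-- `G*` with its isolated vertices removed. -/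
def gstarMinus (G : SimpleGraph α) : SimpleGraph {x | ∃ y, (gstar G).Adj x y} :=
  SimpleGraph.induce _ (gstar G)

/-- Disjoint union of two graphs. -/
def disjUnion (G : SimpleGraph α) (H : SimpleGraph β) : SimpleGraph (α ⊕ β) where
  Adj x y := match x, y with
    | Sum.inl a, Sum.inl b => G.Adj a b
    | Sum.inr a, Sum.inr b => H.Adj a b
    | _, _ => False
  symm := ⟨by
    rintro (a | a) (b | b) h <;> simp_all <;> exact h.symm⟩
  loopless := ⟨by
    rintro (a | a) h <;> simp_all⟩

/-- `k` disjoint copies of a graph. -/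
def copies (k : ℕ) (G : SimpleGraph α) : SimpleGraph (Fin k × α) where
  Adj p q := p.1 = q.1 ∧ G.Adj p.2 q.2
  symm := ⟨fun p q h => ⟨h.1.symm, h.2.symm⟩⟩
  loopless := ⟨fun p h => G.loopless.1 _ h.2⟩

/-- The join `K₁ + H` of a single vertex with `H`. -/
def joinK1 (H : SimpleGraph β) : SimpleGraph (Unit ⊕ β) where
  Adj x y := match x, y with
    | Sum.inl _, Sum.inl _ => False
    | Sum.inl _, Sum.inr _ => True
    | Sum.inr _, Sum.inl _ => True
    | Sum.inr a, Sum.inr b => H.Adj a b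
  symm := ⟨by
    rintro (a | a) (b | b) h <;> simp_all <;> exact h.symm⟩
  loopless := ⟨by
    rintro (a | a) h <;> simp_all⟩

/-- `w` strongly resolves the pair `u, v`. -/
def StronglyResolves (G : SimpleGraph α) (w u v : α) : Prop :=
  G.edist w u = G.edist w v + G.edist v u ∨ G.edist w v = G.edist w u + G.edist u v

/-- A strong metric generator. -/
def IsStrongGenerator (G : SimpleGraph α) (S : Finset α) : Prop :=
  ∀ u v : α, u ≠ v → ∃ w ∈ S, StronglyResolves G w u v

/-- The strong metric dimension. -/
noncomputable def sdim (G : SimpleGraph α) : ℕ :=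
  sInf {k | ∃ S : Finset α, IsStrongGenerator G S ∧ S.card = k}

/-- A vertex cover. -/
def IsVertexCover (G : SimpleGraph α) (S : Finset α) : Prop :=
  ∀ ⦃u v : α⦄, G.Adj u v → u ∈ S ∨ v ∈ S

/-- The vertex cover number `α(G)`. -/
noncomputable def vcNum (G : SimpleGraph α) : ℕ :=
  sInf {k | ∃ S : Finset α, IsVertexCover G S ∧ S.card = k}

/-- The independence number `β(G)`. -/
noncomputable def indepNum (G : SimpleGraph α) : ℕ :=
  sSup {k | ∃ S : Finset α, (∀ u ∈ S, ∀ v ∈ S, ¬ G.Adj u v) ∧ S.card = k}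

/-! ### Auxiliary material for `stmt_14` -/

section StrongAux

lemma enat_le_one_cases {e : ℕ∞} (h : e ≤ 1) : e = 0 ∨ e = 1 := by
  cases e with
  | top => simp at h
  | coe n =>
    have hn : n ≤ 1 := by exact_mod_cast h
    interval_cases n
    · exact Or.inl rfl
    · exact Or.inr rfl

lemma enat_two_le {e : ℕ∞} (h0 : e ≠ 0) (h1 : e ≠ 1) : 2 ≤ e := by
  cases e with
  | top => exact le_top
  | coe n =>
    have hn0 : n ≠ 0 := by simpa using h0
    have hn1 : n ≠ 1 := by simpa using h1
    exact_mod_cast (by omega : 2 ≤ n)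

lemma enat_le_one_of_not_two_le {e : ℕ∞} (h : ¬ 2 ≤ e) : e ≤ 1 := by
  cases e with
  | top => exact absurd le_top h
  | coe n =>
    have hn : ¬ 2 ≤ n := fun hh => h (by exact_mod_cast hh)
    exact_mod_cast (by omega : n ≤ 1)

variable {G : SimpleGraph α} {H : SimpleGraph β}

lemma exists_adj [Fintype α] (hG : G.Connected) (hn : 2 ≤ Fintype.card α) (a : α) :
    ∃ x, G.Adj a x := by
  obtain ⟨b, hb⟩ := Fintype.exists_ne_of_one_lt_card (by omega) a
  obtain ⟨p⟩ := hG.preconnected a b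
  cases p with
  | nil => exact absurd rfl hb
  | cons ha q => exact ⟨_, ha⟩

/-- The homomorphism `x ↦ (x, d)` from `G` into `lexProd G H`. -/
def sndConstHom (G : SimpleGraph α) (H : SimpleGraph β) (d : β) : G →g lexProd G H where
  toFun := fun x => (x, d)
  map_rel' := fun h => Or.inl h

lemma lex_edist_le_of_ne (hG : G.Connected) {a c : α} (h : a ≠ c) (b d : β) :
    (lexProd G H).edist (a, b) (c, d) ≤ G.edist a c := by
  have hne : G.edist a c ≠ ⊤ := edist_ne_top_iff_reachable.mpr (hG.preconnected a c)
  obtain ⟨p, hp⟩ := exists_walk_of_edist_ne_top hne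
  rw [← hp]
  cases p with
  | nil => exact absurd rfl h
  | @cons _ x _ ha q =>
    calc (lexProd G H).edist (a, b) (c, d)
        ≤ ((Walk.cons (Or.inl ha : (lexProd G H).Adj (a, b) (x, d))
            (q.map (sndConstHom G H d))).length : ℕ∞) := edist_le _
      _ = ((Walk.cons ha q).length : ℕ∞) := by
          show (((q.map (sndConstHom G H d)).length + 1 : ℕ) : ℕ∞) = ((q.length + 1 : ℕ) : ℕ∞)
          rw [Walk.length_map]

lemma fst_edist_le_walk {p q : α × β} (w : (lexProd G H).Walk p q) :
    G.edist p.1 q.1 ≤ w.length := by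
  induction w with
  | nil => simp
  | @cons u x v h p ih =>
    rw [Walk.length_cons, Nat.cast_add, Nat.cast_one]
    rcases h with hg | ⟨he, _⟩
    · calc G.edist u.1 v.1 ≤ G.edist u.1 x.1 + G.edist x.1 v.1 := SimpleGraph.edist_triangle
        _ ≤ 1 + (p.length : ℕ∞) :=
            add_le_add (le_of_eq (edist_eq_one_iff_adj.mpr hg)) ih
        _ = (p.length : ℕ∞) + 1 := add_comm _ _
    · rw [he]
      exact le_trans ih le_self_add

lemma fst_edist_le_edist {p q : α × β} :
    G.edist p.1 q.1 ≤ (lexProd G H).edist p q := by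
  by_cases htop : (lexProd G H).edist p q = ⊤
  · simp [htop]
  · obtain ⟨w, hw⟩ := exists_walk_of_edist_ne_top htop
    rw [← hw]
    exact fst_edist_le_walk w

lemma lex_edist_eq (hG : G.Connected) {a c : α} (h : a ≠ c) (b d : β) :
    (lexProd G H).edist (a, b) (c, d) = G.edist a c :=
  le_antisymm (lex_edist_le_of_ne hG h b d) fst_edist_le_edist

lemma lex_edist_le_two [Fintype α] (hG : G.Connected) (hn : 2 ≤ Fintype.card α)
    (a : α) (b y : β) : (lexProd G H).edist (a, b) (a, y) ≤ 2 := by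
  by_cases hby : b = y
  · subst hby; simp
  · obtain ⟨x, hx⟩ := exists_adj hG hn a
    calc (lexProd G H).edist (a, b) (a, y)
        ≤ ((Walk.cons (Or.inl hx : (lexProd G H).Adj (a, b) (x, b))
            (Walk.cons (Or.inl hx.symm : (lexProd G H).Adj (x, b) (a, y))
              Walk.nil)).length : ℕ∞) := edist_le _
      _ = 2 := by show ((2 : ℕ) : ℕ∞) = 2; norm_num

lemma two_le_edist_of_mmd (htw : ∀ u v : α, TrueTwins G u v → u = v)
    {a c : α} (h : a ≠ c) (hm : MMD G a c) : 2 ≤ G.edist a c := by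
  refine enat_two_le (fun h0 => h (edist_eq_zero_iff.mp h0)) (fun h1 => ?_)
  have hadj : G.Adj a c := edist_eq_one_iff_adj.mp h1
  have h1' : G.edist c a = 1 := by rw [edist_comm]; exact h1
  refine h (htw a c (fun w => ?_))
  constructor
  · rintro (haw | rfl)
    · have hle := hm.1 w haw
      rw [h1] at hle
      rcases enat_le_one_cases hle with h0 | h0
      · exact Or.inr (edist_eq_zero_iff.mp h0)
      · exact Or.inl (edist_eq_one_iff_adj.mp h0)
    · exact Or.inl hadj.symm
  · rintro (hcw | rfl)
    · have hle := hm.2 w hcw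
      rw [h1'] at hle
      rcases enat_le_one_cases hle with h0 | h0
      · exact Or.inr (edist_eq_zero_iff.mp h0)
      · exact Or.inl (edist_eq_one_iff_adj.mp h0)
    · exact Or.inl hadj

lemma maxdist_lex_of_ne [Fintype α] (hG : G.Connected) (hn : 2 ≤ Fintype.card α)
    {a c : α} (h : a ≠ c) (h2 : 2 ≤ G.edist a c) (hm : MaxDistant G a c) (b d : β) :
    MaxDistant (lexProd G H) (a, b) (c, d) := by
  rintro ⟨w, y⟩ (haw | ⟨heq, hby⟩)
  · rw [lex_edist_eq hG h]
    by_cases hwc : w = c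
    · subst hwc
      exact le_trans (lex_edist_le_two hG hn _ _ _) h2
    · rw [lex_edist_eq hG (fun e => hwc e.symm)]
      exact hm w haw
  · dsimp only at heq
    subst heq
    rw [lex_edist_eq hG h, lex_edist_eq hG (Ne.symm h)]
    exact le_of_eq (edist_comm)

lemma maxdist_lex_same_two [Fintype α] (hG : G.Connected) (hn : 2 ≤ Fintype.card α)
    {a : α} {b d : β} (h2 : (lexProd G H).edist (a, b) (a, d) = 2) :
    MaxDistant (lexProd G H) (a, b) (a, d) := by
  rintro ⟨w, y⟩ (haw | ⟨heq, hby⟩)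
  · rw [h2]
    have hwa : a ≠ w := fun e => G.loopless.1 a (e ▸ haw)
    rw [lex_edist_eq hG hwa]
    calc G.edist a w = 1 := edist_eq_one_iff_adj.mpr haw
      _ ≤ 2 := by norm_num
  · dsimp only at heq
    subst heq
    rw [h2]
    exact lex_edist_le_two hG hn a d y

lemma maxdist_lex_twins (hG : G.Connected) {a : α} {b d : β}
    (hbd : H.Adj b d) (tw : TrueTwins H b d) :
    MaxDistant (lexProd G H) (a, b) (a, d) := by
  have h1 : (lexProd G H).edist (a, b) (a, d) = 1 :=
    edist_eq_one_iff_adj.mpr (Or.inr ⟨rfl, hbd⟩)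
  rintro ⟨w, y⟩ (haw | ⟨heq, hby⟩)
  · rw [h1]
    have hwa : a ≠ w := fun e => G.loopless.1 a (e ▸ haw)
    rw [lex_edist_eq hG hwa]
    exact le_of_eq (edist_eq_one_iff_adj.mpr haw)
  · dsimp only at heq
    subst heq
    rw [h1]
    by_cases hyd : y = d
    · subst hyd; simp
    · have hdy : H.Adj d y := by
        rcases (tw y).mp (Or.inl hby) with hh | hh
        · exact hh
        · exact absurd hh.symm hyd
      exact le_of_eq (edist_eq_one_iff_adj.mpr (Or.inr ⟨rfl, hdy⟩))

lemma mmd_lex_iff [Fintype α] (hG : G.Connected) (hn : 2 ≤ Fintype.card α)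
    (htw : ∀ u v : α, TrueTwins G u v → u = v)
    {a c : α} {b d : β} (hne : (a, b) ≠ (c, d)) :
    MMD (lexProd G H) (a, b) (c, d) ↔
      (a ≠ c ∧ MMD G a c) ∨ (a = c ∧ (gstar H).Adj b d) := by
  constructor
  · rintro ⟨h1, h2⟩
    by_cases hac : a = c
    · subst hac
      have hbd : b ≠ d := fun e => hne (by rw [e])
      refine Or.inr ⟨rfl, hbd, ?_⟩
      by_cases h2d : 2 ≤ H.edist b d
      · exact Or.inl h2d
      · have hadj : H.Adj b d := by
          rcases enat_le_one_cases (enat_le_one_of_not_two_le h2d) with h0 | h0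
          · exact absurd (edist_eq_zero_iff.mp h0) hbd
          · exact edist_eq_one_iff_adj.mp h0
        refine Or.inr (fun w => ?_)
        have e1 : (lexProd G H).edist (a, b) (a, d) = 1 :=
          edist_eq_one_iff_adj.mpr (Or.inr ⟨rfl, hadj⟩)
        have e1' : (lexProd G H).edist (a, d) (a, b) = 1 := by
          rw [edist_comm]; exact e1
        constructor
        · rintro (hbw | rfl)
          · have hle := h1 (a, w) (Or.inr ⟨rfl, hbw⟩)
            rw [e1] at hle
            rcases enat_le_one_cases hle with h0 | h0
            · exact Or.inr (congrArg Prod.snd (edist_eq_zero_iff.mp h0))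
            · rcases edist_eq_one_iff_adj.mp h0 with hg | ⟨_, hH'⟩
              · exact absurd hg (G.loopless.1 a)
              · exact Or.inl hH'
          · exact Or.inl hadj.symm
        · rintro (hdw | rfl)
          · have hle := h2 (a, w) (Or.inr ⟨rfl, hdw⟩)
            rw [e1'] at hle
            rcases enat_le_one_cases hle with h0 | h0
            · exact Or.inr (congrArg Prod.snd (edist_eq_zero_iff.mp h0))
            · rcases edist_eq_one_iff_adj.mp h0 with hg | ⟨_, hH'⟩
              · exact absurd hg (G.loopless.1 a)
              · exact Or.inl hH'
          · exact Or.inl hadj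
    · refine Or.inl ⟨hac, ?_, ?_⟩
      · intro w haw
        by_cases hwc : w = c
        · subst hwc; simp
        · have hle := h1 (w, b) (Or.inl haw)
          rwa [lex_edist_eq hG (fun e => hwc e.symm), lex_edist_eq hG hac] at hle
      · intro w hcw
        by_cases hwa : w = a
        · subst hwa; simp
        · have hle := h2 (w, d) (Or.inl hcw)
          rwa [lex_edist_eq hG (fun e => hwa e.symm), lex_edist_eq hG (Ne.symm hac)] at hle
  · rintro (⟨hac, hm1, hm2⟩ | ⟨rfl, hbd, hcond⟩)
    · have h2ac : 2 ≤ G.edist a c := two_le_edist_of_mmd htw hac ⟨hm1, hm2⟩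
      have h2ca : 2 ≤ G.edist c a := by rw [edist_comm]; exact h2ac
      exact ⟨maxdist_lex_of_ne hG hn hac h2ac hm1 b d,
        maxdist_lex_of_ne hG hn (Ne.symm hac) h2ca hm2 d b⟩
    · rcases hcond with h2d | tw
      · have he : (lexProd G H).edist (a, b) (a, d) = 2 := by
          refine le_antisymm (lex_edist_le_two hG hn a b d) (enat_two_le ?_ ?_)
          · exact fun h0 => hbd (congrArg Prod.snd (edist_eq_zero_iff.mp h0))
          · intro h1'
            rcases edist_eq_one_iff_adj.mp h1' with hg | ⟨_, hH'⟩
            · exact G.loopless.1 a hg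
            · rw [edist_eq_one_iff_adj.mpr hH'] at h2d
              norm_num at h2d
        have he' : (lexProd G H).edist (a, d) (a, b) = 2 := by
          rw [edist_comm]; exact he
        exact ⟨maxdist_lex_same_two hG hn he, maxdist_lex_same_two hG hn he'⟩
      · have hadj : H.Adj b d := by
          rcases (tw d).mpr (Or.inr rfl) with hh | hh
          · exact hh
          · exact absurd hh hbd
        exact ⟨maxdist_lex_twins hG hadj tw,
          maxdist_lex_twins hG hadj.symm (fun w => (tw w).symm)⟩

lemma mem_boundary_lex_iff [Fintype α] (hG : G.Connected) (hn : 2 ≤ Fintype.card α)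
    (htw : ∀ u v : α, TrueTwins G u v → u = v) {a : α} {b : β} :
    (a, b) ∈ boundary (lexProd G H) ↔ a ∈ boundary G ∨ ∃ d, (gstar H).Adj b d := by
  constructor
  · rintro ⟨⟨c, d⟩, hne, hmmd⟩
    rcases (mmd_lex_iff hG hn htw hne).mp hmmd with ⟨hac, hm⟩ | ⟨rfl, hadj⟩
    · exact Or.inl ⟨c, hac, hm⟩
    · exact Or.inr ⟨d, hadj⟩
  · rintro (⟨c, hac, hm⟩ | ⟨d, hadj⟩)
    · have hne : (a, b) ≠ (c, b) := fun e => hac (congrArg Prod.fst e)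
      exact ⟨(c, b), hne, (mmd_lex_iff hG hn htw hne).mpr (Or.inl ⟨hac, hm⟩)⟩
    · have hne : (a, b) ≠ (a, d) := fun e => hadj.1 (congrArg Prod.snd e)
      exact ⟨(a, d), hne, (mmd_lex_iff hG hn htw hne).mpr (Or.inr ⟨rfl, hadj⟩)⟩

open scoped Classical in
/-- Forward map of the isomorphism in `stmt_14`. -/
noncomputable def srFwd (G : SimpleGraph α) (H : SimpleGraph β) {k : ℕ}
    (g : ↥((boundary G)ᶜ) ≃ Fin k)
    (hT : ∀ u : ↥(boundary (lexProd G H)), u.1.1 ∉ boundary G →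
      ∃ y, (gstar H).Adj u.1.2 y) :
    ↥(boundary (lexProd G H)) →
      ↥(boundary G) × β ⊕ Fin k × ↥{x | ∃ y, (gstar H).Adj x y} :=
  fun u => if h : u.1.1 ∈ boundary G then Sum.inl (⟨u.1.1, h⟩, u.1.2)
    else Sum.inr (g ⟨u.1.1, h⟩, ⟨u.1.2, hT u h⟩)

/-- Backward map of the isomorphism in `stmt_14`. -/
noncomputable def srBwd (G : SimpleGraph α) (H : SimpleGraph β) {k : ℕ}
    (g : ↥((boundary G)ᶜ) ≃ Fin k)
    (hS : ∀ (a : ↥(boundary G)) (b : β), (a.1, b) ∈ boundary (lexProd G H))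
    (hS' : ∀ (i : Fin k) (b : ↥{x | ∃ y, (gstar H).Adj x y}),
      ((g.symm i).1, b.1) ∈ boundary (lexProd G H)) :
    ↥(boundary G) × β ⊕ Fin k × ↥{x | ∃ y, (gstar H).Adj x y} →
      ↥(boundary (lexProd G H)) :=
  fun x => match x with
  | Sum.inl p => ⟨(p.1.1, p.2), hS p.1 p.2⟩
  | Sum.inr p => ⟨((g.symm p.1).1, p.2.1), hS' p.1 p.2⟩

end StrongAux


theorem stmt_14 [Fintype α] [Fintype β] (G : SimpleGraph α) (H : SimpleGraph β)
    (hG : G.Connected) (hn : 2 ≤ Fintype.card α)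
    (htw : ∀ u v : α, TrueTwins G u v → u = v)
    (hH : H ≠ ⊤) (hn' : 2 ≤ Fintype.card β) :
    Nonempty (srGraph (lexProd G H) ≃g
      disjUnion (lexProd (srGraph G) (gstar H))
        (copies (Fintype.card α - Nat.card (boundary G)) (gstarMinus H))) := by
  classical
  have hcard : Fintype.card ↥((boundary G)ᶜ) =
      Fintype.card α - Nat.card ↥(boundary G) := by
    rw [Fintype.card_compl_set, Nat.card_eq_fintype_card]
  let g : ↥((boundary G)ᶜ) ≃ Fin (Fintype.card α - Nat.card ↥(boundary G)) :=
    Fintype.equivFinOfCardEq hcard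
  have hbd : ∀ p : α × β, p ∈ boundary (lexProd G H) ↔
      p.1 ∈ boundary G ∨ ∃ d, (gstar H).Adj p.2 d := by
    rintro ⟨a, b⟩
    exact mem_boundary_lex_iff hG hn htw
  have hT : ∀ u : ↥(boundary (lexProd G H)), u.1.1 ∉ boundary G →
      ∃ y, (gstar H).Adj u.1.2 y :=
    fun u h => ((hbd u.1).mp u.2).resolve_left h
  have hS : ∀ (a : ↥(boundary G)) (b : β), (a.1, b) ∈ boundary (lexProd G H) :=
    fun a b => (hbd _).mpr (Or.inl a.2)
  have hS' : ∀ (i : Fin (Fintype.card α - Nat.card ↥(boundary G)))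
      (b : ↥{x | ∃ y, (gstar H).Adj x y}),
      ((g.symm i).1, b.1) ∈ boundary (lexProd G H) :=
    fun i b => (hbd _).mpr (Or.inr b.2)
  have hli : Function.LeftInverse (srBwd G H g hS hS') (srFwd G H g hT) := by
    rintro ⟨⟨a, b⟩, hu⟩
    by_cases h : a ∈ boundary G
    · simp only [srFwd, srBwd, dif_pos h]
    · simp only [srFwd, srBwd, dif_neg h]
      exact Subtype.ext (by show ((g.symm (g ⟨a, h⟩)).1, b) = (a, b); rw [Equiv.symm_apply_apply])
  have hri : Function.RightInverse (srBwd G H g hS hS') (srFwd G H g hT) := by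
    rintro (⟨⟨a, ha⟩, b⟩ | ⟨i, b, hb⟩)
    · simp only [srFwd, srBwd, ha, ↓reduceDIte]
    · have hni : (g.symm i).1 ∉ boundary G := (g.symm i).2
      simp only [srFwd, srBwd, hni, ↓reduceDIte]
      congr 1
      refine Prod.ext ?_ rfl
      have heq : (⟨(g.symm i).1, hni⟩ : ↥((boundary G)ᶜ)) = g.symm i := Subtype.ext rfl
      rw [heq, g.apply_symm_apply]
  have key : ∀ u v : ↥(boundary (lexProd G H)),
      (disjUnion (lexProd (srGraph G) (gstar H))
        (copies (Fintype.card α - Nat.card ↥(boundary G)) (gstarMinus H))).Adj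
        (srFwd G H g hT u) (srFwd G H g hT v) ↔ (srGraph (lexProd G H)).Adj u v := by
    rintro ⟨⟨a, b⟩, hu⟩ ⟨⟨c, d⟩, hv⟩
    have hadj_iff : (srGraph (lexProd G H)).Adj ⟨(a, b), hu⟩ ⟨(c, d), hv⟩ ↔
        ((a ≠ c ∧ MMD G a c) ∨ (a = c ∧ (gstar H).Adj b d)) := by
      constructor
      · rintro ⟨hne, hm⟩
        exact (mmd_lex_iff hG hn htw hne).mp hm
      · intro h
        have hne : (a, b) ≠ (c, d) := by
          rcases h with ⟨hac, _⟩ | ⟨rfl, hbd', _⟩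
          · exact fun e => hac (congrArg Prod.fst e)
          · exact fun e => hbd' (congrArg Prod.snd e)
        exact ⟨hne, (mmd_lex_iff hG hn htw hne).mpr h⟩
    rw [hadj_iff]
    by_cases ha : a ∈ boundary G <;> by_cases hc : c ∈ boundary G
    · simp only [srFwd, dif_pos ha, dif_pos hc]
      show ((a ≠ c ∧ MMD G a c) ∨
        ((⟨a, ha⟩ : ↥(boundary G)) = ⟨c, hc⟩ ∧ (gstar H).Adj b d)) ↔ _
      rw [Subtype.mk_eq_mk]
    · simp only [srFwd, dif_pos ha, dif_neg hc]
      refine iff_of_false (fun h => h) ?_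
      rintro (⟨hac, hm⟩ | ⟨rfl, _⟩)
      · exact hc ⟨a, fun e => hac e.symm, hm.2, hm.1⟩
      · exact hc ha
    · simp only [srFwd, dif_neg ha, dif_pos hc]
      refine iff_of_false (fun h => h) ?_
      rintro (⟨hac, hm⟩ | ⟨rfl, _⟩)
      · exact ha ⟨c, hac, hm⟩
      · exact ha hc
    · simp only [srFwd, dif_neg ha, dif_neg hc]
      show ((g ⟨a, ha⟩ = g ⟨c, hc⟩) ∧ (gstar H).Adj b d) ↔ _
      constructor
      · rintro ⟨heq, hst⟩
        exact Or.inr ⟨congrArg Subtype.val (g.injective heq), hst⟩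
      · rintro (⟨hac, hm⟩ | ⟨rfl, hst⟩)
        · exact absurd ⟨c, hac, hm⟩ ha
        · exact ⟨rfl, hst⟩
  exact ⟨⟨⟨srFwd G H g hT, srBwd G H g hS hS', hli, hri⟩, fun {u v} => key u v⟩⟩

end Paper
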